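/- Let $Z_1,\dots,Z_n$ ($n \geq 3$) be independent standard normal random variables and $\lambda_1 \geq \dots \geq \lambda_n > 0$ with $\sum_{k=1}^n \lambda_k^2 = 1$ and $\lambda_1^2 \geq 1/2$. Then the probability density function $p$ of $W_0 = \lambda_1 Z_1^2 + \dots + \lambda_n Z_n^2$ satisfies $\sup_x p(x) \geq \frac{e^{-2}}{4\sqrt{2\pi}} A_2^{-1/4}$, where $A_2 = \sum_{k=2}^n \lambda_k^2$. -/

import Mathlib

open MeasureTheory ProbabilityTheory Real Set Filter



lemma gfix (k : ℕ) : (fun x : ℝ => x ^ (k:ℝ) * rexp (-(1/2) * x ^ 2))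
    = fun x : ℝ => x ^ k * rexp (-x^2/2) := by
  funext x
  rw [Real.rpow_natCast]
  congr 1
  ring

lemma gInt (k : ℕ) : Integrable (fun x : ℝ => x ^ k * rexp (-x^2/2)) := by
  have h := integrable_rpow_mul_exp_neg_mul_sq (b := (1/2 : ℝ)) (by norm_num)
    (s := (k : ℝ)) (lt_of_lt_of_le neg_one_lt_zero (Nat.cast_nonneg k))
  rwa [gfix k] at h

lemma gint0 : ∫ x in Ioi (0:ℝ), rexp (-x^2/2) = Real.sqrt (2*π) / 2 := by
  have h := integral_gaussian_Ioi (1/2)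
  have e1 : ∀ x : ℝ, -(1/2 : ℝ) * x ^ 2 = -x^2/2 := fun x => by ring
  simp_rw [e1] at h
  rw [h, show π / (1/2 : ℝ) = 2 * π by ring]

lemma gtend (k : ℕ) : Tendsto (fun x : ℝ => x ^ k * rexp (-x^2/2)) atTop (nhds 0) := by
  have h2 : Tendsto (fun x : ℝ => rexp (-(1/2) * x)) atTop (nhds 0) := by
    have hh : Tendsto (fun x : ℝ => (1/2 : ℝ) * x) atTop atTop :=
      tendsto_id.const_mul_atTop (by norm_num)
    simpa [Function.comp_def, neg_mul] using tendsto_exp_neg_atTop_nhds_zero.comp hh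
  have h := (rpow_mul_exp_neg_mul_sq_isLittleO_exp_neg (b := (1/2:ℝ)) (by norm_num)
    (k : ℝ)).trans_tendsto h2
  rwa [gfix k] at h

lemma gkey (k : ℕ) : ∫ x in Ioi (0:ℝ), x ^ (k+2) * rexp (-x^2/2)
    = (k+1 : ℝ) * ∫ x in Ioi (0:ℝ), x ^ k * rexp (-x^2/2) := by
  have hderiv : ∀ x : ℝ, HasDerivAt (fun x : ℝ => -(x ^ (k+1) * rexp (-x^2/2)))
      (x ^ (k+2) * rexp (-x^2/2) - (k+1 : ℝ) * (x ^ k * rexp (-x^2/2))) x := by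
    intro x
    have h1 : HasDerivAt (fun y : ℝ => -y^2/2) (-x) x := by
      have h := ((hasDerivAt_pow 2 x).neg.div_const 2)
      refine h.congr_deriv ?_
      simp
      ring_nf
    have h3 := ((hasDerivAt_pow (k+1) x).mul h1.exp).neg
    refine h3.congr_deriv ?_
    push_cast
    ring
  have hint : IntegrableOn (fun x : ℝ =>
      x ^ (k+2) * rexp (-x^2/2) - (k+1 : ℝ) * (x ^ k * rexp (-x^2/2))) (Ioi 0) :=
    ((gInt (k+2)).sub ((gInt k).const_mul _)).integrableOn
  have htend : Tendsto (fun x : ℝ => -(x ^ (k+1) * rexp (-x^2/2))) atTop (nhds 0) := by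
    simpa using (gtend (k+1)).neg
  have h := integral_Ioi_of_hasDerivAt_of_tendsto' (fun x _ => hderiv x) hint htend
  simp only [ne_eq, zero_pow, Nat.succ_ne_zero, not_false_eq_true, zero_mul, neg_zero,
    sub_zero] at h
  rw [integral_sub (gInt (k+2)).integrableOn ((gInt k).const_mul _).integrableOn,
      integral_const_mul] at h
  linarith [h]

lemma gfull (k : ℕ) (hk : Even k) :
    ∫ x : ℝ, x ^ k * rexp (-x^2/2) = 2 * ∫ x in Ioi (0:ℝ), x ^ k * rexp (-x^2/2) := by
  have h := _root_.integral_comp_abs (f := fun x : ℝ => x ^ k * rexp (-x^2/2))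
  rw [← h]
  congr 1
  funext x
  rw [hk.pow_abs, sq_abs]

lemma gpdf (x : ℝ) : gaussianPDFReal 0 1 x = (Real.sqrt (2*π))⁻¹ * rexp (-x^2/2) := by
  simp [gaussianPDFReal]

lemma gmeas : Measurable fun x : ℝ => (gaussianPDFReal 0 1 x).toNNReal :=
  (measurable_gaussianPDFReal 0 1).real_toNNReal

lemma gdens : gaussianReal 0 1 = volume.withDensity fun x => ((gaussianPDFReal 0 1 x).toNNReal : ENNReal) := by
  rw [gaussianReal_of_var_ne_zero 0 one_ne_zero]
  rfl

lemma integral_gaussianReal (g : ℝ → ℝ) :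
    ∫ x, g x ∂(gaussianReal 0 1) = ∫ x, gaussianPDFReal 0 1 x * g x := by
  rw [gdens, integral_withDensity_eq_integral_smul gmeas g]
  congr 1
  funext x
  simp [NNReal.smul_def, Real.coe_toNNReal _ (gaussianPDFReal_nonneg 0 1 x)]

lemma integrable_gaussianReal_pow (k : ℕ) :
    Integrable (fun x : ℝ => x ^ k) (gaussianReal 0 1) := by
  rw [gdens, integrable_withDensity_iff_integrable_smul gmeas]
  have h := (gInt k).const_mul (Real.sqrt (2*π))⁻¹
  refine h.congr (Eventually.of_forall fun x => ?_)
  show (√(2 * π))⁻¹ * (x ^ k * rexp (-x ^ 2 / 2)) = (gaussianPDFReal 0 1 x).toNNReal • x ^ k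
  rw [NNReal.smul_def, Real.coe_toNNReal _ (gaussianPDFReal_nonneg 0 1 x), gpdf, smul_eq_mul]
  ring

lemma gmoment2 : ∫ x, x ^ 2 ∂(gaussianReal 0 1) = 1 := by
  rw [integral_gaussianReal]
  have : ∀ x : ℝ, gaussianPDFReal 0 1 x * x ^ 2 = (Real.sqrt (2*π))⁻¹ * (x^2 * rexp (-x^2/2)) := by
    intro x; rw [gpdf]; ring
  simp_rw [this]
  rw [integral_const_mul, gfull 2 (by decide), gkey 0]
  have h0 : ∫ x in Ioi (0:ℝ), x ^ 0 * rexp (-x^2/2) = Real.sqrt (2*π)/2 := by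
    simpa using gint0
  rw [h0]
  have : Real.sqrt (2*π) ≠ 0 := by positivity
  field_simp
  norm_num

lemma gmoment4 : ∫ x, x ^ 4 ∂(gaussianReal 0 1) = 3 := by
  rw [integral_gaussianReal]
  have : ∀ x : ℝ, gaussianPDFReal 0 1 x * x ^ 4 = (Real.sqrt (2*π))⁻¹ * (x^4 * rexp (-x^2/2)) := by
    intro x; rw [gpdf]; ring
  simp_rw [this]
  rw [integral_const_mul, gfull 4 (by decide), show (4:ℕ) = 2 + 2 from rfl, gkey 2, gkey 0]
  have h0 : ∫ x in Ioi (0:ℝ), x ^ 0 * rexp (-x^2/2) = Real.sqrt (2*π)/2 := by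
    simpa using gint0
  rw [h0]
  have : Real.sqrt (2*π) ≠ 0 := by positivity
  field_simp
  ring

lemma iIndepFun_congr_ae {Ω : Type*} [MeasurableSpace Ω] {μ : Measure Ω} {n : ℕ}
    {f g : Fin n → Ω → ℝ} (h : iIndepFun f μ)
    (hfg : ∀ i, f i =ᵐ[μ] g i) : iIndepFun g μ := by
  rw [iIndepFun_iff_measure_inter_preimage_eq_mul] at h ⊢
  intro S sets hsets
  have hall : ∀ᵐ ω ∂μ, ∀ i, f i ω = g i ω := ae_all_iff.2 hfg
  have hset : ∀ (i : Fin n), (g i ⁻¹' sets i : Set Ω) =ᵐ[μ] f i ⁻¹' sets i := fun i =>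
    Filter.eventuallyEq_set.2 ((hfg i).mono fun ω hω => by
      simp only [Set.mem_preimage, hω])
  have hint : (⋂ i ∈ S, g i ⁻¹' sets i : Set Ω) =ᵐ[μ] ⋂ i ∈ S, f i ⁻¹' sets i :=
    Filter.eventuallyEq_set.2 (hall.mono fun ω hω => by
      simp only [Set.mem_iInter, Set.mem_preimage, hω, implies_true])
  rw [measure_congr hint, h S hsets]
  exact Finset.prod_congr rfl fun i _ => (measure_congr (hset i)).symm

set_option maxHeartbeats 2000000 in
/-- If `n ≥ 3`, `λ₁ ≥ ⋯ ≥ λₙ > 0`, `∑ λₖ² = 1` and `λ₁² ≥ 1/2`, then the density `p` of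
`W₀ = ∑ λₖ Zₖ²` satisfies `sup p ≥ (e⁻²/(4√(2π))) A₂^{-1/4}` where `A₂ = ∑_{k≥2} λₖ²`. -/
theorem max_density_ge_of_large_first_weight
    {Ω : Type*} [MeasureSpace Ω] [IsProbabilityMeasure (ℙ : Measure Ω)]
    {n : ℕ} (hn3 : 3 ≤ n) (hn : 0 < n) (Z : Fin n → Ω → ℝ) (l : Fin n → ℝ)
    (hpos : ∀ k, 0 < l k) (hmono : Antitone l)
    (hnorm : ∑ k, (l k) ^ 2 = 1) (hl1 : 1 / 2 ≤ (l ⟨0, hn⟩) ^ 2)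
    (hindep : iIndepFun Z ℙ)
    (hgauss : ∀ k, Measure.map (Z k) ℙ = gaussianReal 0 1)
    (p : ℝ → ℝ) (hp_nonneg : ∀ x, 0 ≤ p x)
    (hp_zero : ∀ x ≤ 0, p x = 0)
    (hp_cont : ContinuousOn p (Set.Ioi 0))
    (hp_pdf : Measure.map (fun ω => ∑ k, l k * (Z k ω) ^ 2) ℙ
        = volume.withDensity (fun x => ENNReal.ofReal (p x))) :
    ENNReal.ofReal
        (Real.exp (-2) / (4 * Real.sqrt (2 * π))
          * (∑ k ∈ Finset.univ.erase ⟨0, hn⟩, (l k) ^ 2) ^ (-(1 / 4 : ℝ)))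
      ≤ ⨆ x : ℝ, ENNReal.ofReal (p x) := by
  classical
  have hπ : 0 < π := Real.pi_pos
  set i0 : Fin n := ⟨0, hn⟩ with hi0
  set s : Finset (Fin n) := Finset.univ.erase i0 with hs
  set A : ℝ := ∑ k ∈ s, (l k) ^ 2 with hA
  have hl0pos : 0 < l i0 := hpos i0
  have hnormsplit : (l i0) ^ 2 + A = 1 := by
    have h := Finset.sum_erase_add Finset.univ (fun k => l k ^ 2) (Finset.mem_univ i0)
    rw [hnorm] at h
    rw [hA, hs]
    linarith [h]
  have hAnonneg : 0 ≤ A := Finset.sum_nonneg fun k _ => sq_nonneg _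
  have h1n : (1 : ℕ) < n := lt_of_lt_of_le (by norm_num) hn3
  have hApos : 0 < A := by
    have hk1 : (⟨1, h1n⟩ : Fin n) ∈ s := by
      simp [hs, Finset.mem_erase, Fin.ext_iff]
    calc (0:ℝ) < (l ⟨1, h1n⟩) ^ 2 := pow_pos (hpos _) 2
      _ ≤ A := Finset.single_le_sum (fun k _ => sq_nonneg (l k)) hk1
  have hAle : A ≤ 1/2 := by linarith
  have hl0le1 : l i0 ≤ 1 := by nlinarith
  have hl0half : (1/2 : ℝ) ≤ l i0 := by nlinarith
  -- measurable modifications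
  have hZae : ∀ k, AEMeasurable (Z k) ℙ := by
    intro k
    by_contra hc
    have h0 := Measure.map_of_not_aemeasurable hc
    rw [hgauss k] at h0
    have h1 := measure_univ (μ := gaussianReal 0 1)
    rw [h0] at h1
    simp at h1
  set Z' : Fin n → Ω → ℝ := fun k => (hZae k).mk (Z k) with hZ'
  have hZ'meas : ∀ k, Measurable (Z' k) := fun k => (hZae k).measurable_mk
  have hZeq : ∀ k, Z k =ᵐ[ℙ] Z' k := fun k => (hZae k).ae_eq_mk
  have hgauss' : ∀ k, Measure.map (Z' k) ℙ = gaussianReal 0 1 := fun k => by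
    rw [← Measure.map_congr (hZeq k)]; exact hgauss k
  have hindep' : iIndepFun Z' ℙ := iIndepFun_congr_ae hindep hZeq
  set Y : Fin n → Ω → ℝ := fun k ω => l k * (Z' k ω) ^ 2 with hY
  have hYmeas : ∀ k, Measurable (Y k) := fun k => ((hZ'meas k).pow_const 2).const_mul _
  have hYindep : iIndepFun Y ℙ :=
    hindep'.comp (fun k (x : ℝ) => l k * x ^ 2)
      (fun k => (measurable_id.pow_const 2).const_mul _)
  -- moments
  have hInt2 : ∀ k, ∫ ω, (Z' k ω) ^ 2 ∂ℙ = 1 := by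
    intro k
    have h := integral_map (μ := ℙ) (hZ'meas k).aemeasurable
      (f := fun x : ℝ => x ^ 2) (by
        rw [hgauss' k]
        exact (continuous_pow 2).aestronglyMeasurable)
    rw [hgauss' k, gmoment2] at h
    exact h.symm
  have hInt4 : ∀ k, ∫ ω, (Z' k ω) ^ 4 ∂ℙ = 3 := by
    intro k
    have h := integral_map (μ := ℙ) (hZ'meas k).aemeasurable
      (f := fun x : ℝ => x ^ 4) (by
        rw [hgauss' k]
        exact (continuous_pow 4).aestronglyMeasurable)
    rw [hgauss' k, gmoment4] at h
    exact h.symm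
  have hmemZsq : ∀ k, MemLp (fun ω => (Z' k ω) ^ 2) 2 ℙ := by
    intro k
    have hgm : AEStronglyMeasurable (fun x : ℝ => x ^ 2) (Measure.map (Z' k) ℙ) := by
      rw [hgauss' k]; exact (continuous_pow 2).aestronglyMeasurable
    have h1 : MemLp (fun x : ℝ => x ^ 2) 2 (gaussianReal 0 1) := by
      refine (memLp_two_iff_integrable_sq ((continuous_pow 2).aestronglyMeasurable)).2 ?_
      refine (integrable_gaussianReal_pow 4).congr (Eventually.of_forall fun x => ?_)
      ring
    have h2 := (memLp_map_measure_iff hgm (hZ'meas k).aemeasurable).1 (by rwa [hgauss' k])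
    exact h2
  have hmemY : ∀ k, MemLp (Y k) 2 ℙ := fun k => (hmemZsq k).const_mul (l k)
  have hvarZsq : ∀ k, variance (fun ω => (Z' k ω) ^ 2) ℙ = 2 := by
    intro k
    rw [variance_eq_sub (hmemZsq k)]
    have e : (fun ω => (Z' k ω) ^ 2) ^ 2 = fun ω => (Z' k ω) ^ 4 := by
      funext ω; simp only [Pi.pow_apply]; ring
    rw [e, hInt4 k, hInt2 k]
    norm_num
  have hvarY : ∀ k, variance (Y k) ℙ = (l k) ^ 2 * 2 := by
    intro k
    have h := variance_const_mul (l k) (fun ω => (Z' k ω) ^ 2) ℙ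
    rw [hvarZsq k] at h
    exact h
  set R : Ω → ℝ := ∑ k ∈ s, Y k with hR
  have hRfun : R = fun ω => ∑ k ∈ s, Y k ω := by
    funext ω; rw [hR]; simp [Finset.sum_apply]
  have hRmeas : Measurable R := by
    rw [hRfun]; exact Finset.measurable_sum s fun k _ => hYmeas k
  have hmemR : MemLp R 2 ℙ := memLp_finsetSum' s fun k _ => hmemY k
  have hpair : Set.Pairwise ↑s fun i j => IndepFun (Y i) (Y j) ℙ :=
    fun i _ j _ hij => hYindep.indepFun hij
  have hvarR : variance R ℙ = 2 * A := by
    rw [hR, IndepFun.variance_sum (fun k _ => hmemY k) hpair]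
    rw [hA, Finset.sum_congr rfl fun k _ => hvarY k, ← Finset.sum_mul]
    ring
  set m : ℝ := ∫ ω, R ω ∂ℙ with hm
  set t : ℝ := Real.sqrt A with ht
  set c : ℝ := 2 * Real.sqrt A with hc
  have htpos : 0 < t := Real.sqrt_pos.2 hApos
  have hcpos : 0 < c := by positivity
  have htle1 : t ≤ 1 := by
    rw [ht]
    calc Real.sqrt A ≤ Real.sqrt 1 := Real.sqrt_le_sqrt (by linarith)
      _ = 1 := Real.sqrt_one
  -- Chebyshev
  have hcheb := meas_ge_le_variance_div_sq (μ := ℙ) hmemR hcpos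
  have hfrac : variance R ℙ / c ^ 2 = 1/2 := by
    rw [hvarR, hc, mul_pow, sq_sqrt hApos.le]
    field_simp
  rw [hfrac] at hcheb
  set G : Set Ω := R ⁻¹' Set.Ioo (m - c) (m + c) with hG
  have hGmeas : MeasurableSet G := hRmeas measurableSet_Ioo
  have hGcompl : {ω | c ≤ |R ω - m|} = Gᶜ := by
    ext ω
    simp only [Set.mem_setOf_eq, Set.mem_compl_iff, hG, Set.mem_preimage, Set.mem_Ioo]
    rw [← not_lt, abs_sub_lt_iff]
    constructor
    · intro h h2
      exact h ⟨by linarith [h2.1, h2.2], by linarith [h2.1, h2.2]⟩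
    · intro h h2
      exact h ⟨by linarith [h2.1, h2.2], by linarith [h2.1, h2.2]⟩
  have hGprob : ENNReal.ofReal (1/2) ≤ ℙ G := by
    have h1 : ℙ Gᶜ ≤ ENNReal.ofReal (1/2) := by rw [← hGcompl]; exact hcheb
    have h2 : ℙ G = 1 - ℙ Gᶜ := by
      rw [prob_compl_eq_one_sub hGmeas]
      rw [ENNReal.sub_sub_cancel ENNReal.one_ne_top prob_le_one]
    rw [h2]
    calc ENNReal.ofReal (1/2) = 1 - ENNReal.ofReal (1/2) := by
          rw [← ENNReal.ofReal_one, ← ENNReal.ofReal_sub _ (by norm_num : (0:ℝ) ≤ 1/2)]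
          norm_num
      _ ≤ 1 - ℙ Gᶜ := tsub_le_tsub_left h1 1
  -- the event for coordinate 0
  set a : ℝ := Real.sqrt (t / l i0) with ha
  have hapos : 0 < a := Real.sqrt_pos.2 (by positivity)
  have hasq : a ^ 2 = t / l i0 := sq_sqrt (by positivity)
  have hasqle : a ^ 2 ≤ 2 := by
    rw [hasq, div_le_iff₀ hl0pos]
    nlinarith
  have hage : Real.sqrt t ≤ a := by
    rw [ha]
    apply Real.sqrt_le_sqrt
    rw [le_div_iff₀ hl0pos]
    nlinarith
  set E0 : Set Ω := Y i0 ⁻¹' Set.Iic t with hE0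
  have hIccsub : Z' i0 ⁻¹' Set.Icc (-a) a ⊆ E0 := by
    intro ω hω
    simp only [Set.mem_preimage, Set.mem_Icc] at hω
    simp only [hE0, Set.mem_preimage, Set.mem_Iic, hY]
    have h1 : (Z' i0 ω) ^ 2 ≤ a ^ 2 := sq_le_sq' hω.1 hω.2
    calc l i0 * (Z' i0 ω) ^ 2 ≤ l i0 * (t / l i0) := by
          apply mul_le_mul_of_nonneg_left _ hl0pos.le
          rw [← hasq]; exact h1
      _ = t := by field_simp
  have hE0prob : ENNReal.ofReal (2 * Real.sqrt t * rexp (-1) / Real.sqrt (2*π)) ≤ ℙ E0 := by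
    refine le_trans ?_ (measure_mono hIccsub)
    have h1 : ℙ (Z' i0 ⁻¹' Set.Icc (-a) a) = gaussianReal 0 1 (Set.Icc (-a) a) := by
      rw [← hgauss' i0, Measure.map_apply (hZ'meas i0) measurableSet_Icc]
    rw [h1, gaussianReal_apply 0 one_ne_zero]
    have hptw : ∀ x ∈ Set.Icc (-a) a,
        ENNReal.ofReal ((Real.sqrt (2*π))⁻¹ * rexp (-(a^2)/2)) ≤ gaussianPDF 0 1 x := by
      intro x hx
      rw [gaussianPDF]
      apply ENNReal.ofReal_le_ofReal
      rw [gpdf]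
      have hxa : x ^ 2 ≤ a ^ 2 := sq_le_sq' hx.1 hx.2
      have : rexp (-(a^2)/2) ≤ rexp (-x^2/2) := by
        apply Real.exp_le_exp.2; linarith
      exact mul_le_mul_of_nonneg_left this (by positivity)
    calc ENNReal.ofReal (2 * Real.sqrt t * rexp (-1) / Real.sqrt (2*π))
        ≤ ENNReal.ofReal ((Real.sqrt (2*π))⁻¹ * rexp (-(a^2)/2) * (2*a)) := by
          apply ENNReal.ofReal_le_ofReal
          have hsp : (0:ℝ) < Real.sqrt (2*π) := Real.sqrt_pos.2 (by positivity)
          have hee : rexp (-1) ≤ rexp (-(a^2)/2) := by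
            apply Real.exp_le_exp.2; linarith
          have hmm : Real.sqrt t * rexp (-1) ≤ a * rexp (-(a^2)/2) :=
            mul_le_mul hage hee (Real.exp_pos _).le hapos.le
          rw [div_eq_mul_inv]
          nlinarith [Real.exp_pos (-(a^2)/2), Real.sqrt_nonneg t, inv_pos.2 hsp]
      _ = ENNReal.ofReal ((Real.sqrt (2*π))⁻¹ * rexp (-(a^2)/2)) * volume (Set.Icc (-a) a) := by
          rw [Real.volume_Icc, ← ENNReal.ofReal_mul (by positivity)]
          congr 1
          ring
      _ = ∫⁻ _ in Set.Icc (-a) a, ENNReal.ofReal ((Real.sqrt (2*π))⁻¹ * rexp (-(a^2)/2)) := by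
          rw [setLIntegral_const]
      _ ≤ ∫⁻ x in Set.Icc (-a) a, gaussianPDF 0 1 x :=
          setLIntegral_mono (measurable_gaussianPDF 0 1) hptw
  -- independence
  have hInd : IndepFun R (Y i0) ℙ := by
    rw [hR]
    exact hYindep.indepFun_finsetSum_of_notMem hYmeas (Finset.notMem_erase i0 Finset.univ)
  have hprod : ℙ (G ∩ E0) = ℙ G * ℙ E0 :=
    hInd.measure_inter_preimage_eq_mul _ _ measurableSet_Ioo measurableSet_Iic
  -- inclusion into interval for W'
  set W' : Ω → ℝ := fun ω => ∑ k, Y k ω with hW'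
  have hW'meas : Measurable W' := by
    apply Finset.measurable_sum
    exact fun k _ => hYmeas k
  have hWae : (fun ω => ∑ k, l k * (Z k ω) ^ 2) =ᵐ[ℙ] W' := by
    have hall : ∀ᵐ ω ∂ℙ, ∀ k, Z k ω = Z' k ω := ae_all_iff.2 hZeq
    filter_upwards [hall] with ω hω
    exact Finset.sum_congr rfl fun k _ => by rw [hω k]
  have hmap : Measure.map W' ℙ = volume.withDensity fun x => ENNReal.ofReal (p x) := by
    rw [← Measure.map_congr hWae]; exact hp_pdf
  have hsplit : ∀ ω, W' ω = Y i0 ω + R ω := by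
    intro ω
    rw [hRfun]
    exact (Finset.add_sum_erase Finset.univ (fun k => Y k ω) (Finset.mem_univ i0)).symm
  have hsub : G ∩ E0 ⊆ W' ⁻¹' Set.Icc (m - c) (m + c + t) := by
    rintro ω ⟨hg, he⟩
    simp only [hG, Set.mem_preimage, Set.mem_Ioo] at hg
    simp only [hE0, Set.mem_preimage, Set.mem_Iic] at he
    have hY0 : 0 ≤ Y i0 ω := mul_nonneg hl0pos.le (sq_nonneg _)
    simp only [Set.mem_preimage, Set.mem_Icc, hsplit ω]
    constructor
    · linarith [hg.1]
    · linarith [hg.2]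
  set S := ⨆ x : ℝ, ENNReal.ofReal (p x) with hS
  have hIcc : ℙ (W' ⁻¹' Set.Icc (m - c) (m + c + t)) ≤ S * ENNReal.ofReal (5 * Real.sqrt A) := by
    rw [← Measure.map_apply hW'meas measurableSet_Icc, hmap,
      withDensity_apply _ measurableSet_Icc]
    calc ∫⁻ x in Set.Icc (m - c) (m + c + t), ENNReal.ofReal (p x)
        ≤ ∫⁻ _ in Set.Icc (m - c) (m + c + t), S :=
          lintegral_mono fun x => le_iSup (fun y => ENNReal.ofReal (p y)) x
      _ = S * volume (Set.Icc (m - c) (m + c + t)) := setLIntegral_const _ _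
      _ = S * ENNReal.ofReal (5 * Real.sqrt A) := by
          rw [Real.volume_Icc]
          congr 2
          rw [hc, ht]
          ring
  have chain : ENNReal.ofReal (1/2) * ENNReal.ofReal (2 * Real.sqrt t * rexp (-1) / Real.sqrt (2*π))
      ≤ S * ENNReal.ofReal (5 * Real.sqrt A) :=
    calc ENNReal.ofReal (1/2) * ENNReal.ofReal (2 * Real.sqrt t * rexp (-1) / Real.sqrt (2*π))
        ≤ ℙ G * ℙ E0 := mul_le_mul' hGprob hE0prob
      _ = ℙ (G ∩ E0) := hprod.symm
      _ ≤ ℙ (W' ⁻¹' Set.Icc (m - c) (m + c + t)) := measure_mono hsub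
      _ ≤ S * ENNReal.ofReal (5 * Real.sqrt A) := hIcc
  -- final arithmetic
  set u : ℝ := A ^ ((1:ℝ)/4) with hu
  have hupos : 0 < u := Real.rpow_pos_of_pos hApos _
  have hsqrtA : Real.sqrt A = u ^ 2 := by
    rw [hu, ← Real.rpow_natCast (A ^ ((1:ℝ)/4)) 2, ← Real.rpow_mul hAnonneg,
      Real.sqrt_eq_rpow]
    norm_num
  have hsqrtt : Real.sqrt t = u := by
    rw [ht, hu, Real.sqrt_eq_rpow, Real.sqrt_eq_rpow, ← Real.rpow_mul hAnonneg]
    norm_num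
  have hAneg : A ^ (-(1/4 : ℝ)) = u⁻¹ := by
    rw [hu, ← Real.rpow_neg_one (A ^ ((1:ℝ)/4)), ← Real.rpow_mul hAnonneg]
    norm_num
  have hfinal_real : rexp (-2) / (4 * Real.sqrt (2*π)) * A ^ (-(1/4:ℝ)) * (5 * Real.sqrt A)
      ≤ 1/2 * (2 * Real.sqrt t * rexp (-1) / Real.sqrt (2*π)) := by
    rw [hAneg, hsqrtA, hsqrtt]
    have hsp : (0:ℝ) < Real.sqrt (2*π) := Real.sqrt_pos.2 (by positivity)
    have hL : rexp (-2) / (4 * Real.sqrt (2*π)) * u⁻¹ * (5 * u ^ 2)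
        = 5 * rexp (-2) * u / (4 * Real.sqrt (2*π)) := by
      field_simp
    have hR' : 1/2 * (2 * u * rexp (-1) / Real.sqrt (2*π)) = rexp (-1) * u / Real.sqrt (2*π) := by
      ring
    rw [hL, hR', div_le_div_iff₀ (by positivity) (by positivity)]
    have he1 : (5:ℝ) * rexp (-2) ≤ 4 * rexp (-1) := by
      have h2 : rexp (-2) * rexp 1 = rexp (-1) := by
        rw [← Real.exp_add]; norm_num
      nlinarith [Real.exp_one_gt_d9, Real.exp_pos (-2)]
    nlinarith [mul_le_mul_of_nonneg_right he1
      (mul_nonneg hupos.le hsp.le), Real.exp_pos (-1), Real.exp_pos (-2)]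
  have h5ne : ENNReal.ofReal (5 * Real.sqrt A) ≠ 0 := by
    simp only [ne_eq, ENNReal.ofReal_eq_zero, not_le]
    positivity
  have h5top : ENNReal.ofReal (5 * Real.sqrt A) ≠ ⊤ := ENNReal.ofReal_ne_top
  have hkey : ENNReal.ofReal (rexp (-2) / (4 * Real.sqrt (2*π)) * A ^ (-(1/4:ℝ)))
      * ENNReal.ofReal (5 * Real.sqrt A) ≤ S * ENNReal.ofReal (5 * Real.sqrt A) := by
    rw [← ENNReal.ofReal_mul (by positivity)]
    refine le_trans (ENNReal.ofReal_le_ofReal hfinal_real) ?_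
    rw [ENNReal.ofReal_mul (by norm_num)]
    exact chain
  exact (ENNReal.mul_le_mul_iff_left h5ne h5top).1 hkey
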